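/- Let m, n ≥ 1 and let K be the Kirchhoff (Laplacian) matrix of the complete bipartite graph K_{m,n}. Then the characteristic polynomial of K is det(x·1 − K) = x · (x − (m+n)) · (x − m)^{n−1} · (x − n)^{m−1}; equivalently, the Laplacian eigenvalues of K_{m,n} are 0, the value m with multiplicity n−1, the value n with multiplicity m−1, and m+n. -/

import Mathlib

open Matrix

instance completeBipartiteGraphAdjDecidable (m n : ℕ) :
    DecidableRel (completeBipartiteGraph (Fin m) (Fin n)).Adj :=
  fun a b => inferInstanceAs (Decidable (_ ∨ _))

lemma block_eq (m n : ℕ) (x : ℝ) :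
    (x • (1 : Matrix (Fin m ⊕ Fin n) (Fin m ⊕ Fin n) ℝ) -
        (completeBipartiteGraph (Fin m) (Fin n)).lapMatrix ℝ) =
    fromBlocks ((x - n) • 1) (of fun _ _ => (1:ℝ)) (of fun _ _ => 1) ((x - m) • 1) := by
  have hr : (Finset.univ.filter (fun w : Fin m ⊕ Fin n => w.isRight = true)).card = n := by
    have : Finset.univ.filter (fun w : Fin m ⊕ Fin n => w.isRight = true)
        = Finset.univ.map ⟨Sum.inr, Sum.inr_injective⟩ := by ext (w|w) <;> simp
    simp [this]
  have hl : (Finset.univ.filter (fun w : Fin m ⊕ Fin n => w.isLeft = true)).card = m := by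
    have : Finset.univ.filter (fun w : Fin m ⊕ Fin n => w.isLeft = true)
        = Finset.univ.map ⟨Sum.inl, Sum.inl_injective⟩ := by ext (w|w) <;> simp
    simp [this]
  ext (i|i) (j|j) <;>
    simp [SimpleGraph.lapMatrix, SimpleGraph.degMatrix, Matrix.one_apply,
      SimpleGraph.degree, SimpleGraph.neighborFinset_eq_filter, Matrix.diagonal_apply,
      hr, hl] <;>
    split <;> simp_all

lemma detcalc (m n : ℕ) (x : ℝ) (hxn : x ≠ (n:ℝ)) (hxm : x ≠ (m:ℝ)) :
    (fromBlocks ((x - (n:ℝ)) • 1) (of fun _ _ => (1:ℝ)) (of fun _ _ => 1)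
      ((x - (m:ℝ)) • 1) : Matrix (Fin m ⊕ Fin n) (Fin m ⊕ Fin n) ℝ).det =
    (x - (n:ℝ))^m * ((x - (m:ℝ))^n * (1 - m*n*((x-m)⁻¹*(x-n)⁻¹))) := by
  have hn0 : x - (n:ℝ) ≠ 0 := sub_ne_zero.2 hxn
  have hm0 : x - (m:ℝ) ≠ 0 := sub_ne_zero.2 hxm
  haveI : Invertible ((x - (n:ℝ)) • 1 : Matrix (Fin m) (Fin m) ℝ) :=
    ⟨(x - (n:ℝ))⁻¹ • 1,
     by rw [Matrix.smul_mul, Matrix.mul_smul, one_mul, smul_smul, inv_mul_cancel₀ hn0, one_smul],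
     by rw [Matrix.smul_mul, Matrix.mul_smul, one_mul, smul_smul, mul_inv_cancel₀ hn0, one_smul]⟩
  rw [det_fromBlocks₁₁, invOf_eq_nonsing_inv]
  have hNinv : (((x - (n:ℝ)) • 1 : Matrix (Fin m) (Fin m) ℝ))⁻¹ = (x - (n:ℝ))⁻¹ • 1 :=
    Matrix.inv_eq_right_inv (by
      rw [Matrix.smul_mul, Matrix.mul_smul, one_mul, smul_smul, mul_inv_cancel₀ hn0, one_smul])
  rw [hNinv]
  have hschur : (((x - (m:ℝ)) • 1 : Matrix (Fin n) (Fin n) ℝ)) -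
      ((of fun _ _ => (1:ℝ)) : Matrix (Fin n) (Fin m) ℝ) *
        (((x - (n:ℝ))⁻¹ • 1 : Matrix (Fin m) (Fin m) ℝ)) *
        ((of fun _ _ => (1:ℝ)) : Matrix (Fin m) (Fin n) ℝ) =
      (((x - (m:ℝ)) • 1 : Matrix (Fin n) (Fin n) ℝ)) +
        replicateCol (Fin 1) (fun _ : Fin n => -((m:ℝ) * (x - (n:ℝ))⁻¹)) * replicateRow (Fin 1) (fun _ : Fin n => (1:ℝ)) := by
    ext i j
    simp [Matrix.mul_apply, Matrix.one_apply]
    split <;> ring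
  rw [hschur]
  have hdetA : IsUnit (((x - (m:ℝ)) • 1 : Matrix (Fin n) (Fin n) ℝ)).det := by
    rw [Matrix.det_smul, det_one, mul_one]
    exact isUnit_iff_ne_zero.2 (pow_ne_zero _ hm0)
  erw [det_add_replicateCol_mul_replicateRow (ι := Fin 1) hdetA]
  have hAinv : (((x - (m:ℝ)) • 1 : Matrix (Fin n) (Fin n) ℝ))⁻¹ = (x - (m:ℝ))⁻¹ • 1 :=
    Matrix.inv_eq_right_inv (by
      rw [Matrix.smul_mul, Matrix.mul_smul, one_mul, smul_smul, mul_inv_cancel₀ hm0, one_smul])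
  rw [hAinv]
  have hd : (1 + replicateRow (Fin 1) (fun _ : Fin n => (1:ℝ)) *
      ((x - (m:ℝ))⁻¹ • 1 : Matrix (Fin n) (Fin n) ℝ) *
      replicateCol (Fin 1) (fun _ : Fin n => -((m:ℝ) * (x - (n:ℝ))⁻¹))).det
      = 1 - (n:ℝ) * ((x - (m:ℝ))⁻¹ * ((m:ℝ) * (x - (n:ℝ))⁻¹)) := by
    rw [Matrix.det_fin_one]
    simp [Matrix.mul_apply, Matrix.one_apply, Finset.mul_sum]
    ring
  rw [Matrix.det_smul, det_one, mul_one, Matrix.det_smul, det_one, mul_one,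
    Fintype.card_fin, Fintype.card_fin]
  exact (congrArg (fun t => (x - (n:ℝ))^m * ((x - (m:ℝ))^n * t)) hd).trans (by ring)

lemma alg (m n : ℕ) (hm : 1 ≤ m) (hn : 1 ≤ n) (x : ℝ) (hxn : x ≠ (n:ℝ)) (hxm : x ≠ (m:ℝ)) :
    (x - (n:ℝ))^m * ((x - (m:ℝ))^n * (1 - m*n*((x-m)⁻¹*(x-n)⁻¹))) =
    x * (x - (m + n : ℝ)) * (x - (m : ℝ)) ^ (n - 1) * (x - (n : ℝ)) ^ (m - 1) := by
  have hn0 : x - (n:ℝ) ≠ 0 := sub_ne_zero.2 hxn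
  have hm0 : x - (m:ℝ) ≠ 0 := sub_ne_zero.2 hxm
  have key : (x - (n:ℝ)) * ((x - (m:ℝ)) * (1 - m*n*((x-m)⁻¹*(x-n)⁻¹)))
      = x * (x - ((m:ℝ) + n)) := by
    field_simp
    ring
  have e1 : (x - (n:ℝ))^m = (x - (n:ℝ))^(m-1) * (x - (n:ℝ)) := by
    conv_lhs => rw [← Nat.succ_pred_eq_of_pos hm]
    rw [pow_succ, Nat.pred_eq_sub_one]
  have e2 : (x - (m:ℝ))^n = (x - (m:ℝ))^(n-1) * (x - (m:ℝ)) := by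
    conv_lhs => rw [← Nat.succ_pred_eq_of_pos hn]
    rw [pow_succ, Nat.pred_eq_sub_one]
  rw [e1, e2]
  linear_combination ((x - (n:ℝ))^(m-1) * (x - (m:ℝ))^(n-1)) * key

/-- The characteristic polynomial of the Kirchhoff (Laplacian) matrix `K` of
the complete bipartite graph `K_{m,n}` (for `m, n ≥ 1`) is
`det(x·1 - K) = x (x - (m+n)) (x - m)^(n-1) (x - n)^(m-1)`; equivalently, the
Laplacian eigenvalues are `0`, `m` with multiplicity `n-1`, `n` with
multiplicity `m-1`, and `m+n`. -/
theorem complete_bipartite_laplacian_charpoly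
    (m n : ℕ) (hm : 1 ≤ m) (hn : 1 ≤ n) :
    ∀ x : ℝ,
      (x • (1 : Matrix (Fin m ⊕ Fin n) (Fin m ⊕ Fin n) ℝ) -
        (completeBipartiteGraph (Fin m) (Fin n)).lapMatrix ℝ).det =
      x * (x - (m + n : ℝ)) * (x - (m : ℝ)) ^ (n - 1) * (x - (n : ℝ)) ^ (m - 1) := by
  have hfun : (fun x : ℝ =>
      (x • (1 : Matrix (Fin m ⊕ Fin n) (Fin m ⊕ Fin n) ℝ) -
        (completeBipartiteGraph (Fin m) (Fin n)).lapMatrix ℝ).det) =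
      fun x : ℝ =>
        x * (x - (m + n : ℝ)) * (x - (m : ℝ)) ^ (n - 1) * (x - (n : ℝ)) ^ (m - 1) := by
    have hc1 : Continuous fun x : ℝ =>
        (x • (1 : Matrix (Fin m ⊕ Fin n) (Fin m ⊕ Fin n) ℝ) -
          (completeBipartiteGraph (Fin m) (Fin n)).lapMatrix ℝ).det :=
      Continuous.matrix_det ((continuous_id.smul continuous_const).sub continuous_const)
    have hc2 : Continuous fun x : ℝ =>
        x * (x - (m + n : ℝ)) * (x - (m : ℝ)) ^ (n - 1) * (x - (n : ℝ)) ^ (m - 1) := by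
      continuity
    have hdense : Dense ({(n:ℝ)}ᶜ ∩ {(m:ℝ)}ᶜ : Set ℝ) :=
      (dense_compl_singleton _).inter_of_isOpen_left (dense_compl_singleton _)
        isOpen_compl_singleton
    refine hc1.ext_on hdense hc2 ?_
    rintro x ⟨hxn, hxm⟩
    have hxn : x ≠ (n:ℝ) := hxn
    have hxm : x ≠ (m:ℝ) := hxm
    dsimp only
    rw [block_eq, detcalc m n x hxn hxm]
    exact alg m n hm hn x hxn hxm
  exact fun x => congrFun hfun x
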